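/- arXiv:2505.15587 — 4 statements merged into one kernel-verified Lean document; each statement's English description precedes it below -/
import Mathlib

section
/- Define Diff(n, c, t) = Σ_{k=0}^{n-1} (t^k / k!) · (e^{-t} − c^k · e^{-c·t}). Then for all c > 1, n ≥ 1, and t ≥ 0, Diff(n, c, t) ≥ 0. -/
open Finset

lemma poisson_cdf_deriv (m : ℕ) (s : ℝ) :
    HasDerivAt (fun s : ℝ => Real.exp (-s) * ∑ k ∈ Finset.range (m + 1), s ^ k / (Nat.factorial k : ℝ))
      (-(s ^ m / (Nat.factorial m : ℝ)) * Real.exp (-s)) s := by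
  have hexp : HasDerivAt (fun s : ℝ => Real.exp (-s)) (-Real.exp (-s)) s := by
    exact (hasDerivAt_neg s).exp.congr_deriv (by ring)
  have hsum : HasDerivAt (fun s : ℝ => ∑ k ∈ Finset.range (m + 1), s ^ k / (Nat.factorial k : ℝ))
      (∑ k ∈ Finset.range m, s ^ k / (Nat.factorial k : ℝ)) s := by
    have h := HasDerivAt.fun_sum (u := Finset.range (m + 1))
      (fun k _ => (hasDerivAt_pow k s).div_const (Nat.factorial k : ℝ))
    refine h.congr_deriv (Eq.symm ?_)
    rw [Finset.sum_range_succ']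
    simp only [Nat.factorial_succ, Nat.cast_mul, Nat.cast_add, Nat.cast_one, pow_zero,
      Nat.factorial_zero, Nat.cast_zero, zero_mul, zero_div, add_zero, Nat.add_sub_cancel]
    refine Finset.sum_congr rfl fun k _ => ?_
    have hk : ((k : ℝ) + 1) ≠ 0 := by positivity
    field_simp
  have := hexp.fun_mul hsum
  refine this.congr_deriv (Eq.symm ?_)
  rw [Finset.sum_range_succ]
  ring

lemma poisson_cdf_anti (m : ℕ) :
    AntitoneOn (fun s : ℝ => Real.exp (-s) * ∑ k ∈ Finset.range (m + 1), s ^ k / (Nat.factorial k : ℝ))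
      (Set.Ici (0 : ℝ)) := by
  apply antitoneOn_of_deriv_nonpos (convex_Ici 0)
  · exact Continuous.continuousOn (by continuity)
  · intro x hx
    exact (poisson_cdf_deriv m x).differentiableAt.differentiableWithinAt
  · intro x hx
    rw [interior_Ici] at hx
    rw [(poisson_cdf_deriv m x).deriv]
    have hx0 : (0:ℝ) ≤ x := le_of_lt hx
    have h1 : (0:ℝ) ≤ x ^ m / (Nat.factorial m : ℝ) := by positivity
    have h2 : (0:ℝ) < Real.exp (-x) := Real.exp_pos _
    nlinarith

theorem stmt_2 (n : ℕ) (hn : 1 ≤ n) (c t : ℝ) (hc : 1 < c) (ht : 0 ≤ t) :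
    0 ≤ ∑ k ∈ Finset.range n,
          t ^ k / (Nat.factorial k : ℝ) * (Real.exp (-t) - c ^ k * Real.exp (-c * t)) := by
  obtain ⟨m, rfl⟩ : ∃ m, n = m + 1 := ⟨n - 1, (Nat.succ_pred_eq_of_pos hn).symm⟩
  have hct : t ≤ c * t := by nlinarith
  have hct0 : (0:ℝ) ≤ c * t := le_trans ht hct
  have key := poisson_cdf_anti m (Set.mem_Ici.mpr ht) (Set.mem_Ici.mpr hct0) hct
  simp only at key
  have : ∑ k ∈ Finset.range (m + 1),
      t ^ k / (Nat.factorial k : ℝ) * (Real.exp (-t) - c ^ k * Real.exp (-c * t))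
      = Real.exp (-t) * ∑ k ∈ Finset.range (m + 1), t ^ k / (Nat.factorial k : ℝ)
        - Real.exp (-(c * t)) * ∑ k ∈ Finset.range (m + 1), (c * t) ^ k / (Nat.factorial k : ℝ) := by
    rw [Finset.mul_sum, Finset.mul_sum, ← Finset.sum_sub_distrib]
    refine Finset.sum_congr rfl fun k _ => ?_
    rw [mul_pow]
    ring_nf
  rw [this]
  linarith
end

section
/- Define Diff(n, c, t) = Σ_{k=0}^{n-1} (t^k / k!) · (e^{-t} − c^k · e^{-c·t}) for c > 1 and n ≥ 1. Then Diff(n, c, ·) attains its global maximum on [0, ∞) at t* = n · ln(c) / (c − 1), i.e., Diff(n, c, t) ≤ Diff(n, c, t*) for all t ≥ 0. -/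
open Real Finset

lemma sum_hasDerivAt (a : ℝ) (m : ℕ) (t : ℝ) :
    HasDerivAt (fun s => ∑ k ∈ Finset.range (m+1),
        (a*s)^k / (Nat.factorial k : ℝ) * Real.exp (-(a*s)))
      (-(a * ((a*t)^m / (Nat.factorial m : ℝ) * Real.exp (-(a*t))))) t := by
  induction m with
  | zero =>
      have h1 : HasDerivAt (fun s : ℝ => -(a*s)) (-a) t := by
        simpa using ((hasDerivAt_id t).const_mul a).fun_neg
      have h := h1.exp
      have he : (fun s => ∑ k ∈ Finset.range (0+1),
          (a*s)^k / (Nat.factorial k : ℝ) * Real.exp (-(a*s)))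
          = fun s : ℝ => Real.exp (-(a*s)) := by
        funext s; simp
      rw [he]
      convert h using 1
      norm_num
      ring
  | succ m ih =>
      have hexp : HasDerivAt (fun s : ℝ => Real.exp (-(a*s))) (Real.exp (-(a*t)) * (-a)) t := by
        have h1 : HasDerivAt (fun s : ℝ => -(a*s)) (-a) t := by
          simpa using ((hasDerivAt_id t).const_mul a).fun_neg
        exact h1.exp
      have hpow : HasDerivAt (fun s : ℝ => (a*s)^(m+1) / (Nat.factorial (m+1) : ℝ))
          ((↑(m+1) * (a*t)^m * a) / (Nat.factorial (m+1) : ℝ)) t := by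
        have : HasDerivAt (fun s : ℝ => (a*s)^(m+1)) (↑(m+1) * (a*t)^m * a) t := by
          simpa using (((hasDerivAt_id t).const_mul a).fun_pow (m+1))
        exact this.div_const _
      have hterm := hpow.fun_mul hexp
      have hsum := ih.fun_add hterm
      have heq : (fun s => ∑ k ∈ Finset.range (m+1+1),
          (a*s)^k / (Nat.factorial k : ℝ) * Real.exp (-(a*s)))
          = (fun s => (∑ k ∈ Finset.range (m+1),
          (a*s)^k / (Nat.factorial k : ℝ) * Real.exp (-(a*s)))
            + (a*s)^(m+1) / (Nat.factorial (m+1) : ℝ) * Real.exp (-(a*s))) := by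
        funext s; rw [Finset.sum_range_succ]
      rw [heq]
      refine hsum.congr_deriv ?_
      have hm : (Nat.factorial m : ℝ) ≠ 0 := Nat.cast_ne_zero.2 m.factorial_ne_zero
      have hm1 : (Nat.factorial (m+1) : ℝ) ≠ 0 := Nat.cast_ne_zero.2 (m+1).factorial_ne_zero
      have hfs : (Nat.factorial (m+1) : ℝ) = (m+1) * Nat.factorial m := by
        push_cast [Nat.factorial_succ]; ring
      rw [hfs]; push_cast; field_simp
      ring

theorem stmt_4 (n : ℕ) (hn : 1 ≤ n) (c : ℝ) (hc : 1 < c) (t : ℝ) (ht : 0 ≤ t) :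
    ∑ k ∈ Finset.range n,
        t ^ k / (Nat.factorial k : ℝ) * (Real.exp (-t) - c ^ k * Real.exp (-c * t))
      ≤ ∑ k ∈ Finset.range n,
          (n * Real.log c / (c - 1)) ^ k / (Nat.factorial k : ℝ) *
            (Real.exp (-(n * Real.log c / (c - 1))) -
              c ^ k * Real.exp (-c * (n * Real.log c / (c - 1)))) := by
  obtain ⟨m, rfl⟩ : ∃ m, n = m + 1 := ⟨n - 1, (Nat.succ_pred_eq_of_pos hn).symm⟩
  set n := m + 1 with hndef
  set τ : ℝ := n * Real.log c / (c - 1) with hτ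
  set F : ℝ → ℝ := fun s => ∑ k ∈ Finset.range n,
      s ^ k / (Nat.factorial k : ℝ) * (Real.exp (-s) - c ^ k * Real.exp (-c * s)) with hF
  have hc0 : (0:ℝ) < c := lt_trans one_pos hc
  have hc1 : (0:ℝ) < c - 1 := by linarith
  have hlog : 0 < Real.log c := Real.log_pos hc
  have hτpos : 0 < τ := by
    apply div_pos _ hc1
    positivity
  -- derivative of F
  have hFeq : F = fun s => (∑ k ∈ Finset.range n,
      (1*s)^k / (Nat.factorial k : ℝ) * Real.exp (-(1*s)))
      - ∑ k ∈ Finset.range n, (c*s)^k / (Nat.factorial k : ℝ) * Real.exp (-(c*s)) := by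
    funext s
    rw [hF, ← Finset.sum_sub_distrib]
    refine Finset.sum_congr rfl fun k _ => ?_
    simp only [one_mul, mul_pow]
    ring
  have hder : ∀ s : ℝ, HasDerivAt F
      (s^m / (Nat.factorial m : ℝ) * (c^n * Real.exp (-(c*s)) - Real.exp (-s))) s := by
    intro s
    have h := (sum_hasDerivAt 1 m s).fun_sub (sum_hasDerivAt c m s)
    rw [hFeq]
    refine h.congr_deriv ?_
    simp only [one_mul, mul_pow]
    rw [hndef, pow_succ]
    ring
  -- sign of derivative
  have hsign : ∀ s : ℝ, 0 ≤ s →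
      (s ≤ τ → 0 ≤ s^m / (Nat.factorial m : ℝ) * (c^n * Real.exp (-(c*s)) - Real.exp (-s))) ∧
      (τ ≤ s → s^m / (Nat.factorial m : ℝ) * (c^n * Real.exp (-(c*s)) - Real.exp (-s)) ≤ 0) := by
    intro s hs
    have hcn : (c:ℝ)^n = Real.exp (n * Real.log c) := by
      rw [← Real.exp_log hc0, ← Real.exp_nat_mul, Real.exp_log hc0]
    have hkey : c^n * Real.exp (-(c*s)) - Real.exp (-s)
        = Real.exp (n * Real.log c - c*s) - Real.exp (-s) := by
      rw [hcn, ← Real.exp_add]; ring_nf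
    have hfac : (0:ℝ) < (Nat.factorial m : ℝ) := by positivity
    constructor
    · intro hsτ
      have : -s ≤ n * Real.log c - c * s := by
        have : (c-1) * s ≤ n * Real.log c := by
          rw [hτ] at hsτ
          calc (c-1) * s ≤ (c-1) * τ := by nlinarith
            _ = n * Real.log c := by rw [hτ]; field_simp
        linarith
      have hexp : Real.exp (-s) ≤ Real.exp (n * Real.log c - c * s) := Real.exp_le_exp.2 this
      have h1 : 0 ≤ c^n * Real.exp (-(c*s)) - Real.exp (-s) := by rw [hkey]; linarith
      positivity
    · intro hτs
      have : n * Real.log c - c * s ≤ -s := by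
        have : n * Real.log c ≤ (c-1) * s := by
          have h2 : (c-1) * τ ≤ (c-1) * s := by nlinarith
          have h3 : (c-1) * τ = n * Real.log c := by rw [hτ]; field_simp
          linarith
        linarith
      have hexp : Real.exp (n * Real.log c - c * s) ≤ Real.exp (-s) := Real.exp_le_exp.2 this
      have h1 : c^n * Real.exp (-(c*s)) - Real.exp (-s) ≤ 0 := by rw [hkey]; linarith
      have h2 : 0 ≤ s^m / (Nat.factorial m : ℝ) := by positivity
      exact mul_nonpos_of_nonneg_of_nonpos h2 h1
  have hcont : Continuous F := by
    have : Differentiable ℝ F := fun s => (hder s).differentiableAt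
    exact this.continuous
  have hmono : MonotoneOn F (Set.Icc 0 τ) := by
    apply monotoneOn_of_deriv_nonneg (convex_Icc 0 τ) hcont.continuousOn
    · intro x hx
      exact (hder x).differentiableAt.differentiableWithinAt
    · intro x hx
      rw [interior_Icc] at hx
      rw [(hder x).deriv]
      exact (hsign x hx.1.le).1 hx.2.le
  have hanti : AntitoneOn F (Set.Ici τ) := by
    apply antitoneOn_of_deriv_nonpos (convex_Ici τ) hcont.continuousOn
    · intro x hx
      exact (hder x).differentiableAt.differentiableWithinAt
    · intro x hx
      rw [interior_Ici] at hx
      rw [(hder x).deriv]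
      exact (hsign x (le_trans hτpos.le hx.le)).2 hx.le
  show F t ≤ F τ
  rcases le_total t τ with h | h
  · exact hmono ⟨ht, h⟩ ⟨hτpos.le, le_refl τ⟩ h
  · exact hanti (Set.self_mem_Ici) h h
end

section
/- Let c = e^δ with δ > 0, let t > 0, and set N = ⌈(e^δ − 1)·t/δ⌉. Define Diff(n, c, t) = Σ_{k=0}^{n-1} (t^k/k!)·(e^{-t} − c^k·e^{-c·t}). Then for all natural numbers n, Diff(n, c, t) ≤ Diff(N, c, t), i.e., the maximum over n of Diff(n, c, t) is attained at n = N. -/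
theorem stmt_6 (δ t : ℝ) (hδ : 0 < δ) (ht : 0 < t) (n : ℕ) :
    ∑ k ∈ Finset.range n,
        t ^ k / (Nat.factorial k : ℝ) *
          (Real.exp (-t) - Real.exp δ ^ k * Real.exp (-(Real.exp δ) * t))
      ≤ ∑ k ∈ Finset.range ⌈(Real.exp δ - 1) * t / δ⌉₊,
          t ^ k / (Nat.factorial k : ℝ) *
            (Real.exp (-t) - Real.exp δ ^ k * Real.exp (-(Real.exp δ) * t)) := by
  set N := ⌈(Real.exp δ - 1) * t / δ⌉₊ with hN
  set f : ℕ → ℝ := fun k => t ^ k / (Nat.factorial k : ℝ) *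
      (Real.exp (-t) - Real.exp δ ^ k * Real.exp (-(Real.exp δ) * t)) with hf
  have hcoef : ∀ k : ℕ, 0 ≤ t ^ k / (Nat.factorial k : ℝ) := fun k =>
    div_nonneg (pow_nonneg ht.le k) (Nat.cast_nonneg _)
  have hexp : ∀ k : ℕ, Real.exp δ ^ k * Real.exp (-(Real.exp δ) * t)
      = Real.exp ((k : ℝ) * δ - Real.exp δ * t) := by
    intro k
    rw [← Real.exp_nat_mul, ← Real.exp_add]
    ring_nf
  have hsign : ∀ k : ℕ, ((k : ℝ) * δ ≤ (Real.exp δ - 1) * t ↔ 0 ≤ f k ) := by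
    intro k
    have hcpos : 0 < t ^ k / (Nat.factorial k : ℝ) := by
      positivity
    simp only [hf, hexp]
    constructor
    · intro h
      apply mul_nonneg hcpos.le
      rw [sub_nonneg, Real.exp_le_exp]
      nlinarith
    · intro h
      have h2 : 0 ≤ Real.exp (-t) - Real.exp (↑k * δ - Real.exp δ * t) :=
        nonneg_of_mul_nonneg_right h hcpos
      rw [sub_nonneg, Real.exp_le_exp] at h2
      nlinarith
  have hpos : ∀ k, k < N → 0 ≤ f k := by
    intro k hk
    rw [hN, Nat.lt_ceil] at hk
    rw [← hsign]
    rw [lt_div_iff₀ hδ] at hk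
    nlinarith
  have hneg : ∀ k, N ≤ k → f k ≤ 0 := by
    intro k hk
    rw [hN, Nat.ceil_le, div_le_iff₀ hδ] at hk
    have := (hsign k)
    by_contra h
    push_neg at h
    have h2 : (k:ℝ) * δ ≤ (Real.exp δ - 1) * t := (hsign k).mpr h.le
    -- k*δ ≤ (e^δ-1)t and (e^δ-1)t ≤ k*δ so equal, then f k = 0, contradiction
    have heq : (k : ℝ) * δ = (Real.exp δ - 1) * t := le_antisymm h2 (by linarith [hk])
    have : f k = 0 := by
      simp only [hf, hexp]
      have : (k : ℝ) * δ - Real.exp δ * t = -t := by linarith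
      rw [this]
      ring
    linarith
  rcases le_or_gt n N with h | h
  · apply Finset.sum_le_sum_of_subset_of_nonneg (Finset.range_subset_range.mpr h)
    intro k hkN hkn
    exact hpos k (Finset.mem_range.mp hkN)
  · have : ∑ k ∈ Finset.range n, f k
        = ∑ k ∈ Finset.range N, f k + ∑ k ∈ Finset.Ico N n, f k := by
      simp only [Finset.range_eq_Ico]
      rw [Finset.sum_Ico_consecutive _ (Nat.zero_le N) h.le]
    rw [this]
    have hle : ∑ k ∈ Finset.Ico N n, f k ≤ 0 :=
      Finset.sum_nonpos fun k hk => hneg k (Finset.mem_Ico.mp hk).1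
    linarith
end

section
/- Let E_n be the Erlang CTMC with n transient states and rate 1, and E'_n = c·E_n its acceleration by c ≥ 1 (all rates multiplied by c). Then Pr^{E_n}(◊^{≤t} g) − Pr^{E'_n}(◊^{≤t} g) in absolute value equals Σ_{i=0}^{n-1} (t^i/i!)·e^{-t} · (1 − Σ_{j=0}^{n-i-1} ((t·(c-1))^j / j!) · e^{-t·(c-1)}), and this equals Σ_{k=0}^{n-1} (t^k/k!)·(e^{-t} − c^k·e^{-c·t}). -/
open Finset in
lemma aux_double_eq (n : ℕ) (c t : ℝ) :
    ∑ i ∈ Finset.range n,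
        t ^ i / (Nat.factorial i : ℝ) * Real.exp (-t) *
          (1 - ∑ j ∈ Finset.range (n - i),
            (t * (c - 1)) ^ j / (Nat.factorial j : ℝ) * Real.exp (-(t * (c - 1))))
    = ∑ k ∈ Finset.range n,
        t ^ k / (Nat.factorial k : ℝ) * (Real.exp (-t) - c ^ k * Real.exp (-c * t)) := by
  set s := t * (c - 1) with hs
  have hts : t + s = c * t := by ring
  have hexp : Real.exp (-t) * Real.exp (-s) = Real.exp (-(c * t)) := by
    rw [← Real.exp_add, ← hts]; ring_nf
  have hdiag := Finset.sum_range_diag_flip n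
    (fun i j => t ^ i / (Nat.factorial i : ℝ) * Real.exp (-t) *
      (s ^ j / (Nat.factorial j : ℝ) * Real.exp (-s)))
  calc ∑ i ∈ Finset.range n,
        t ^ i / (Nat.factorial i : ℝ) * Real.exp (-t) *
          (1 - ∑ j ∈ Finset.range (n - i), s ^ j / (Nat.factorial j : ℝ) * Real.exp (-s))
      = ∑ i ∈ Finset.range n,
          (t ^ i / (Nat.factorial i : ℝ) * Real.exp (-t)
            - ∑ j ∈ Finset.range (n - i),
                t ^ i / (Nat.factorial i : ℝ) * Real.exp (-t) *
                  (s ^ j / (Nat.factorial j : ℝ) * Real.exp (-s))) := by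
        apply Finset.sum_congr rfl; intro i _
        rw [mul_sub, mul_one, Finset.mul_sum]
    _ = ∑ i ∈ Finset.range n, t ^ i / (Nat.factorial i : ℝ) * Real.exp (-t)
          - ∑ m ∈ Finset.range n, ∑ k ∈ Finset.range (m + 1),
              t ^ k / (Nat.factorial k : ℝ) * Real.exp (-t) *
                (s ^ (m - k) / (Nat.factorial (m - k) : ℝ) * Real.exp (-s)) := by
        rw [Finset.sum_sub_distrib, hdiag]
    _ = ∑ k ∈ Finset.range n,
          t ^ k / (Nat.factorial k : ℝ) * (Real.exp (-t) - c ^ k * Real.exp (-c * t)) := by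
        rw [← Finset.sum_sub_distrib]
        apply Finset.sum_congr rfl; intro m _
        have hbin : ∑ k ∈ Finset.range (m + 1),
            t ^ k / (Nat.factorial k : ℝ) * Real.exp (-t) *
              (s ^ (m - k) / (Nat.factorial (m - k) : ℝ) * Real.exp (-s))
            = (c * t) ^ m / (Nat.factorial m : ℝ) * Real.exp (-(c * t)) := by
          rw [← hts, add_pow]
          rw [Finset.sum_div, Finset.sum_mul]
          apply Finset.sum_congr rfl; intro k hk
          have hk' : k ≤ m := Nat.lt_succ_iff.mp (Finset.mem_range.mp hk)
          rw [show Real.exp (-(t + s)) = Real.exp (-t) * Real.exp (-s) by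
            rw [← Real.exp_add]; ring_nf]
          have h1 : (Nat.choose m k : ℝ) = (Nat.factorial m : ℝ) /
              ((Nat.factorial k : ℝ) * (Nat.factorial (m - k) : ℝ)) := by
            rw [eq_div_iff (by positivity), ← mul_assoc]
            exact_mod_cast Nat.choose_mul_factorial_mul_factorial hk'
          field_simp [h1]
          rw [h1]; field_simp
        rw [hbin, mul_pow, show (-(c * t)) = -c * t from (neg_mul c t).symm]
        ring
  
/-- `Pr^{E_n}(◊^{≤t} g) = P(Poisson(t) ≥ n) = 1 - Σ_{k<n} (t^k/k!)e^{-t}` and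
`Pr^{E'_n}(◊^{≤t} g) = P(Poisson(c·t) ≥ n)`; the absolute difference equals both
the double-sum expression and the closed form. -/
theorem stmt_12 (n : ℕ) (c t : ℝ) (hc : 1 ≤ c) (ht : 0 ≤ t) :
    |(1 - ∑ k ∈ Finset.range n, t ^ k / (Nat.factorial k : ℝ) * Real.exp (-t)) -
        (1 - ∑ k ∈ Finset.range n, (c * t) ^ k / (Nat.factorial k : ℝ) * Real.exp (-(c * t)))|
      = ∑ i ∈ Finset.range n,
          t ^ i / (Nat.factorial i : ℝ) * Real.exp (-t) *
            (1 - ∑ j ∈ Finset.range (n - i),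
              (t * (c - 1)) ^ j / (Nat.factorial j : ℝ) * Real.exp (-(t * (c - 1))))
    ∧ |(1 - ∑ k ∈ Finset.range n, t ^ k / (Nat.factorial k : ℝ) * Real.exp (-t)) -
        (1 - ∑ k ∈ Finset.range n, (c * t) ^ k / (Nat.factorial k : ℝ) * Real.exp (-(c * t)))|
      = ∑ k ∈ Finset.range n,
          t ^ k / (Nat.factorial k : ℝ) * (Real.exp (-t) - c ^ k * Real.exp (-c * t)) := by
  have hs0 : 0 ≤ t * (c - 1) := mul_nonneg ht (by linarith)
  -- nonnegativity of the double sum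
  have hD : 0 ≤ ∑ i ∈ Finset.range n,
      t ^ i / (Nat.factorial i : ℝ) * Real.exp (-t) *
        (1 - ∑ j ∈ Finset.range (n - i),
          (t * (c - 1)) ^ j / (Nat.factorial j : ℝ) * Real.exp (-(t * (c - 1)))) := by
    apply Finset.sum_nonneg; intro i _
    apply mul_nonneg (by positivity)
    have h1 : ∑ j ∈ Finset.range (n - i),
        (t * (c - 1)) ^ j / (Nat.factorial j : ℝ) * Real.exp (-(t * (c - 1)))
        = (∑ j ∈ Finset.range (n - i), (t * (c - 1)) ^ j / (Nat.factorial j : ℝ)) *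
            Real.exp (-(t * (c - 1))) := by rw [Finset.sum_mul]
    rw [h1, sub_nonneg]
    calc (∑ j ∈ Finset.range (n - i), (t * (c - 1)) ^ j / (Nat.factorial j : ℝ)) *
          Real.exp (-(t * (c - 1)))
        ≤ Real.exp (t * (c - 1)) * Real.exp (-(t * (c - 1))) := by
          apply mul_le_mul_of_nonneg_right _ (Real.exp_pos _).le
          exact Real.sum_le_exp_of_nonneg hs0 _
      _ = 1 := by rw [← Real.exp_add]; ring_nf; exact Real.exp_zero
  have hkey := aux_double_eq n c t
  have habs : |(1 - ∑ k ∈ Finset.range n, t ^ k / (Nat.factorial k : ℝ) * Real.exp (-t)) -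
      (1 - ∑ k ∈ Finset.range n, (c * t) ^ k / (Nat.factorial k : ℝ) * Real.exp (-(c * t)))|
      = ∑ k ∈ Finset.range n,
          t ^ k / (Nat.factorial k : ℝ) * (Real.exp (-t) - c ^ k * Real.exp (-c * t)) := by
    have hdiff : (1 - ∑ k ∈ Finset.range n, t ^ k / (Nat.factorial k : ℝ) * Real.exp (-t)) -
        (1 - ∑ k ∈ Finset.range n, (c * t) ^ k / (Nat.factorial k : ℝ) * Real.exp (-(c * t)))
        = -(∑ k ∈ Finset.range n,
            t ^ k / (Nat.factorial k : ℝ) * (Real.exp (-t) - c ^ k * Real.exp (-c * t))) := by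
      have h : ∀ A B : ℝ, (1 - A) - (1 - B) = B - A := by intros; ring
      rw [h, ← Finset.sum_sub_distrib, ← Finset.sum_neg_distrib]
      apply Finset.sum_congr rfl; intro k _
      rw [mul_pow, show (-(c * t)) = -c * t from (neg_mul c t).symm]
      ring
    rw [hdiff, abs_neg, abs_of_nonneg (hkey ▸ hD)]
  exact ⟨habs.trans hkey.symm, habs⟩
end
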